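/- The extended centroid of the path algebra KC_n of the cycle with n vertices is isomorphic to the field of rational functions K(x). -/

import Mathlib

/-- A directed graph: vertices, edges, source and range maps. -/
structure DGraph : Type 1 where
  V : Type
  Edge : Type
  s : Edge → V
  r : Edge → V

namespace DGraph

/-- A list of edges is composable if consecutive edges match up. -/
def IsComposable (G : DGraph) (l : List G.Edge) : Prop :=
  l.Chain' (fun e f => G.r e = G.s f)

/-- A path in `G`: either a trivial path at a vertex, or a nonempty composable list of edges. -/
def GPath (G : DGraph) : Type :=
  G.V ⊕ {l : List G.Edge // l ≠ [] ∧ G.IsComposable l}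

namespace GPath

variable {G : DGraph}

/-- The source of a path. -/
def src : GPath G → G.V
  | Sum.inl v => v
  | Sum.inr l => G.s (l.1.head l.2.1)

/-- The range of a path. -/
def rng : GPath G → G.V
  | Sum.inl v => v
  | Sum.inr l => G.r (l.1.getLast l.2.1)

/-- The length of a path. -/
def length : GPath G → ℕ
  | Sum.inl _ => 0
  | Sum.inr l => l.1.length

/-- The trivial path at a vertex. -/
def ofVertex (v : G.V) : GPath G := Sum.inl v

/-- The length-one path given by an edge. -/
def ofEdge (e : G.Edge) : GPath G :=
  Sum.inr ⟨[e], by exact ⟨List.cons_ne_nil _ _, List.isChain_singleton e⟩⟩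

/-- Concatenation of composable paths. -/
def comp : (p q : GPath G) → p.rng = q.src → GPath G
  | Sum.inl _, q, _ => q
  | Sum.inr l, Sum.inl _, _ => Sum.inr l
  | Sum.inr l, Sum.inr m, h => Sum.inr ⟨l.1 ++ m.1, by
      refine ⟨by simp [l.2.1], l.2.2.append m.2.2 ?_⟩
      intro x hx y hy
      rw [List.getLast?_eq_some_getLast l.2.1] at hx
      rw [List.head?_eq_head m.2.1] at hy
      cases hx
      cases hy
      exact h⟩

end GPath

end DGraph

open DGraph

/-- A realization of the path algebra of the graph `G` over the field `K`:
a `K`-algebra with a basis indexed by the paths of `G`, multiplying by concatenation. -/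
structure PathAlgebraOn (K : Type) [Field K] (G : DGraph) (A : Type)
    [NonUnitalRing A] [Module K A] where
  basis : Module.Basis (GPath G) K A
  mul_comp : ∀ (p q : GPath G) (h : p.rng = q.src),
      basis p * basis q = basis (p.comp q h)
  mul_ncomp : ∀ p q : GPath G, p.rng ≠ q.src → basis p * basis q = 0

/-- The cycle graph with `n` vertices. -/
def cycleGraph (n : ℕ) [NeZero n] : DGraph where
  V := Fin n
  Edge := Fin n
  s i := i
  r i := i + 1

/-- An admissible pair: a nonzero two-sided ideal `I` together with a linear map
that is an `A`-bimodule homomorphism on `I`.  (Any partial bimodule homomorphism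
defined on `I` extends `K`-linearly to all of `A`, so this encoding is faithful.) -/
structure AdmPair (K : Type) [Field K] (A : Type) [NonUnitalRing A] [Module K A] where
  I : TwoSidedIdeal A
  ne : I ≠ ⊥
  f : A →ₗ[K] A
  map_left : ∀ x ∈ I, ∀ a : A, f (a * x) = a * f x
  map_right : ∀ x ∈ I, ∀ a : A, f (x * a) = f x * a

/-- Two admissible pairs are equivalent iff the maps agree on the intersection of
their ideals. -/
def AdmPair.Equiv {K : Type} [Field K] {A : Type} [NonUnitalRing A] [Module K A]
    (p q : AdmPair K A) : Prop :=
  ∀ x : A, x ∈ p.I → x ∈ q.I → p.f x = q.f x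

open scoped Fin.NatCast Fin.CommRing
open Module

section PathCombinatorics

variable {n : ℕ} [NeZero n]

/-- The list of `m` consecutive edges starting at `v` in the cycle graph. -/
def edgeList (v : Fin n) (m : ℕ) : List (Fin n) :=
  (List.range m).map (fun i => v + (Nat.cast i : Fin n))

@[simp] lemma edgeList_zero (v : Fin n) : edgeList v 0 = [] := rfl

lemma edgeList_succ (v : Fin n) (m : ℕ) :
    edgeList v (m + 1) = v :: edgeList (v + 1) m := by
  unfold edgeList
  rw [List.range_succ_eq_map, List.map_cons, List.map_map]
  congr 1
  · simp
  · apply List.map_congr_left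
    intro i _
    show v + ((i + 1 : ℕ) : Fin n) = (v + 1) + (i : Fin n)
    push_cast
    ring

@[simp] lemma edgeList_length (v : Fin n) (m : ℕ) : (edgeList v m).length = m := by
  simp [edgeList]

@[simp] lemma edgeList_ne_nil (v : Fin n) (m : ℕ) : edgeList v (m+1) ≠ [] := by
  simp [edgeList_succ]

lemma edgeList_head (v : Fin n) (m : ℕ) :
    (edgeList v (m+1)).head (edgeList_ne_nil v m) = v := by
  simp [edgeList_succ]

lemma edgeList_getLast? (v : Fin n) (m : ℕ) :
    (edgeList v (m+1)).getLast? = some (v + (m : Fin n)) := by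
  induction m generalizing v with
  | zero => simp [edgeList_succ]
  | succ k ih =>
    rw [edgeList_succ v (k+1), edgeList_succ (v+1) k, List.getLast?_cons_cons,
      ← edgeList_succ (v+1) k, ih (v+1)]
    congr 1
    push_cast
    ring

lemma edgeList_getLast (v : Fin n) (m : ℕ) :
    (edgeList v (m+1)).getLast (edgeList_ne_nil v m) = v + (m : Fin n) := by
  have := edgeList_getLast? v m
  rwa [List.getLast?_eq_getLast (edgeList_ne_nil v m), Option.some_inj] at this

lemma edgeList_head? (v : Fin n) (m : ℕ) :
    (edgeList v (m+1)).head? = some v := by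
  rw [edgeList_succ]; rfl

lemma edgeList_composable (v : Fin n) (m : ℕ) :
    (cycleGraph n).IsComposable (edgeList v m) := by
  induction m generalizing v with
  | zero => exact List.IsChain.nil
  | succ k ih =>
    rw [edgeList_succ]
    unfold DGraph.IsComposable List.Chain' at *
    refine List.isChain_cons.mpr ?_
    refine ⟨?_, ih (v+1)⟩
    intro y hy
    cases k with
    | zero => simp [edgeList] at hy; cases hy
    | succ k' =>
      have hy : y = v + 1 := Option.some_inj.mp ((Option.mem_def.mp hy).symm.trans (edgeList_head? (v+1) k'))
      subst hy
      rfl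

lemma composable_eq_edgeList (l : List (Fin n)) (hne : l ≠ [])
    (hc : (cycleGraph n).IsComposable l) :
    l = edgeList (l.head hne) l.length := by
  induction l with
  | nil => exact absurd rfl hne
  | cons e t ih =>
    cases t with
    | nil => simp [edgeList_succ]
    | cons f t' =>
      unfold DGraph.IsComposable List.Chain' at hc
      replace hc := List.isChain_cons_cons.mp hc
      have hef : (e + 1 : Fin n) = f := hc.1
      have := ih (by simp) hc.2
      simp only [List.head_cons] at this ⊢
      rw [List.length_cons, edgeList_succ]
      rw [hef]
      exact congrArg (e :: ·) this

/-- The canonical path of length `m` starting at `v` in the cycle graph. -/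
def pth (v : Fin n) : ℕ → DGraph.GPath (cycleGraph n)
  | 0 => Sum.inl v
  | m + 1 => Sum.inr ⟨edgeList v (m+1), edgeList_ne_nil v m, edgeList_composable v (m+1)⟩

@[simp] lemma pth_src (v : Fin n) (m : ℕ) : (pth v m).src = v := by
  cases m with
  | zero => rfl
  | succ k =>
    show (edgeList v (k+1)).head _ = v
    exact edgeList_head v k

@[simp] lemma pth_rng (v : Fin n) (m : ℕ) : (pth v m).rng = v + (m : Fin n) := by
  cases m with
  | zero => simp [pth, DGraph.GPath.rng]; rfl
  | succ k =>
    show (cycleGraph n).r _ = _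
    show ((edgeList v (k+1)).getLast _) + 1 = _
    rw [edgeList_getLast]
    push_cast
    ring

@[simp] lemma pth_length (v : Fin n) (m : ℕ) : (pth v m).length = m := by
  cases m with
  | zero => rfl
  | succ k => show (edgeList v (k+1)).length = k+1; simp

lemma pth_surj (p : DGraph.GPath (cycleGraph n)) : p = pth p.src p.length := by
  cases p with
  | inl v => rfl
  | inr l =>
    obtain ⟨l, hne, hc⟩ := l
    have hl := composable_eq_edgeList l hne hc
    cases hlen : l.length with
    | zero => exact absurd (List.length_eq_zero_iff.mp hlen) hne
    | succ k =>
      show _ = pth ((cycleGraph n).s (l.head hne)) l.length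
      rw [hlen]
      show Sum.inr _ = Sum.inr _
      congr 1
      apply Subtype.ext
      show l = edgeList _ (k+1)
      rw [← hlen]
      convert hl using 2
      exact Iff.rfl

lemma edgeList_append (v : Fin n) (a b : ℕ) :
    edgeList v a ++ edgeList (v + (a : Fin n)) b = edgeList v (a + b) := by
  unfold edgeList
  rw [List.range_add, List.map_append, List.map_map]
  congr 1
  apply List.map_congr_left
  intro i _
  show v + (a : Fin n) + (Nat.cast i : Fin n) = v + (Nat.cast (a + i) : Fin n)
  push_cast
  ring

lemma pth_comp (v : Fin n) (m k : ℕ) (h : (pth v m).rng = (pth (v + (m : Fin n)) k).src) :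
    (pth v m).comp (pth (v + (m : Fin n)) k) h = pth v (m + k) := by
  cases m with
  | zero =>
    show pth (v + ((0:ℕ) : Fin n)) k = pth v (0 + k)
    norm_num
  | succ a =>
    cases k with
    | zero => rfl
    | succ b =>
      show Sum.inr _ = Sum.inr _
      congr 1
      apply Subtype.ext
      show edgeList v (a+1) ++ edgeList (v + ((a+1 : ℕ) : Fin n)) (b+1) = edgeList v (a+1+(b+1))
      exact edgeList_append v (a+1) (b+1)

lemma pth_injective : Function.Injective (fun p : Fin n × ℕ => pth p.1 p.2) := by
  intro ⟨v, m⟩ ⟨w, k⟩ h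
  simp only at h
  have h1 : (pth v m).src = (pth w k).src := by rw [h]
  have h2 : (pth v m).length = (pth w k).length := by rw [h]
  simp at h1 h2
  simp [h1, h2]

/-- Paths in the cycle graph are classified by (source, length). -/
noncomputable def pthEquiv : (Fin n × ℕ) ≃ DGraph.GPath (cycleGraph n) :=
  Equiv.ofBijective (fun p => pth p.1 p.2)
    ⟨pth_injective, fun p => ⟨(p.src, p.length), (pth_surj p).symm⟩⟩

@[simp] lemma pthEquiv_apply (v : Fin n) (m : ℕ) : pthEquiv (v, m) = pth v m := rfl

end PathCombinatorics

section CycleAlgebra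
set_option linter.unusedSectionVars false

open DGraph

variable {K : Type} [Field K] {n : ℕ} [NeZero n]
variable {A : Type} [NonUnitalRing A] [Module K A] [SMulCommClass K A A] [IsScalarTower K A A]
variable (PA : PathAlgebraOn K (cycleGraph n) A)

/-- The basis of the cycle algebra indexed by (source, length). -/
noncomputable def EB : Basis (Fin n × ℕ) K A := PA.basis.reindex pthEquiv.symm

lemma EB_apply (v : Fin n) (m : ℕ) : EB PA (v, m) = PA.basis (pth v m) := by
  rw [EB, Basis.reindex_apply, Equiv.symm_symm, pthEquiv_apply]

lemma EB_mul (v : Fin n) (m : ℕ) (w : Fin n) (k : ℕ) :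
    EB PA (v, m) * EB PA (w, k) = if w = v + (m : Fin n) then EB PA (v, m + k) else 0 := by
  rw [EB_apply, EB_apply]
  by_cases h : w = v + (m : Fin n)
  · subst h
    rw [if_pos rfl, EB_apply]
    have hr : (pth v m).rng = (pth (v + (m : Fin n)) k).src := by simp; rfl
    rw [PA.mul_comp _ _ hr, pth_comp]
  · rw [if_neg h]
    apply PA.mul_ncomp
    simp only [pth_rng, pth_src]
    exact fun hh => h hh.symm

/-- The multiplicative identity of the cycle algebra. -/
noncomputable def oneA : A := ∑ v : Fin n, EB PA (v, 0)

lemma oneA_mul (a : A) : oneA PA * a = a := by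
  have : LinearMap.mulLeft K (oneA PA) = LinearMap.id (R := K) (M := A) := by
    apply Basis.ext (EB PA)
    rintro ⟨w, k⟩
    simp only [LinearMap.mulLeft_apply, LinearMap.id_apply, oneA]
    rw [Finset.sum_mul]
    have : ∀ v : Fin n, EB PA (v, 0) * EB PA (w, k) = if w = v then EB PA (v, k) else 0 := by
      intro v
      rw [EB_mul]
      simp
    simp only [this]
    rw [Finset.sum_ite_eq]
    simp
  calc oneA PA * a = LinearMap.mulLeft K (oneA PA) a := rfl
    _ = a := by rw [this]; rfl

lemma mul_oneA (a : A) : a * oneA PA = a := by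
  have : LinearMap.mulRight K (oneA PA) = LinearMap.id (R := K) (M := A) := by
    apply Basis.ext (EB PA)
    rintro ⟨w, k⟩
    simp only [LinearMap.mulRight_apply, LinearMap.id_apply, oneA]
    rw [Finset.mul_sum]
    have : ∀ v : Fin n, EB PA (w, k) * EB PA (v, 0) = if v = w + (k : Fin n) then EB PA (w, k) else 0 := by
      intro v
      rw [EB_mul]
      simp
    simp only [this]
    rw [Finset.sum_ite_eq']
    simp
  calc a * oneA PA = LinearMap.mulRight K (oneA PA) a := rfl
    _ = a := by rw [this]; rfl

/-- The `j`-th power of the central cycle element. -/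
noncomputable def pc (j : ℕ) : A := ∑ v : Fin n, EB PA (v, n * j)

lemma pc_mul_EB (j : ℕ) (v : Fin n) (r : ℕ) :
    pc PA j * EB PA (v, r) = EB PA (v, n * j + r) := by
  rw [pc, Finset.sum_mul]
  have : ∀ w : Fin n, EB PA (w, n * j) * EB PA (v, r) = if v = w then EB PA (w, n * j + r) else 0 := by
    intro w
    rw [EB_mul]
    congr 1
    rw [eq_iff_iff]
    constructor
    · intro h; rw [h]; push_cast; rw [Fin.natCast_self]; ring
    · intro h; rw [h]; push_cast; rw [Fin.natCast_self]; ring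
  simp only [this]
  rw [Finset.sum_ite_eq]
  simp

lemma EB_mul_pc (j : ℕ) (v : Fin n) (r : ℕ) :
    EB PA (v, r) * pc PA j = EB PA (v, n * j + r) := by
  rw [pc, Finset.mul_sum]
  have : ∀ w : Fin n, EB PA (v, r) * EB PA (w, n * j) = if w = v + (r : Fin n) then EB PA (v, r + n * j) else 0 := by
    intro w
    rw [EB_mul]
  simp only [this]
  rw [Finset.sum_ite_eq']
  simp [add_comm]

lemma pc_comm (j : ℕ) (a : A) : pc PA j * a = a * pc PA j := by
  have : LinearMap.mulLeft K (pc PA j) = LinearMap.mulRight K (pc PA j) := by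
    apply Basis.ext (EB PA)
    rintro ⟨w, k⟩
    simp only [LinearMap.mulLeft_apply, LinearMap.mulRight_apply]
    rw [pc_mul_EB, EB_mul_pc]
  calc pc PA j * a = LinearMap.mulLeft K (pc PA j) a := rfl
    _ = LinearMap.mulRight K (pc PA j) a := by rw [this]
    _ = a * pc PA j := rfl

lemma pc_zero : pc PA 0 = oneA PA := by
  rw [pc, oneA]
  simp

lemma pc_mul_pc (i j : ℕ) : pc PA i * pc PA j = pc PA (i + j) := by
  show pc PA i * (∑ v : Fin n, EB PA (v, n * j)) = ∑ v : Fin n, EB PA (v, n * (i + j))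
  rw [Finset.mul_sum]
  apply Finset.sum_congr rfl
  intro v _
  rw [pc_mul_EB]
  congr 2
  ring

/-- Evaluation of a polynomial at the central element. -/
noncomputable def gc (g : Polynomial K) : A :=
  Finsupp.linearCombination K (pc PA) g.toFinsupp.coeff

lemma gc_add (g g' : Polynomial K) : gc PA (g + g') = gc PA g + gc PA g' := by
  rw [gc, gc, gc, Polynomial.toFinsupp_add, AddMonoidAlgebra.coeff_add, map_add]

lemma gc_monomial (j : ℕ) (c : K) : gc PA (Polynomial.monomial j c) = c • pc PA j := by
  rw [gc, Polynomial.toFinsupp_monomial, AddMonoidAlgebra.coeff_single, Finsupp.linearCombination_single]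

lemma gc_one : gc PA 1 = oneA PA := by
  rw [← Polynomial.monomial_zero_one, gc_monomial, pc_zero, one_smul]

lemma gc_zero : gc PA 0 = 0 := by
  rw [gc]; simp

lemma gc_mul_expand (g : Polynomial K) (a : A) :
    gc PA g * a = g.toFinsupp.coeff.sum fun j c => c • (pc PA j * a) := by
  have : gc PA g * a = LinearMap.mulRight K a (gc PA g) := rfl
  rw [this, gc, Finsupp.linearCombination_apply, map_finsuppSum]
  apply Finsupp.sum_congr
  intro j _
  rw [LinearMap.map_smul]
  rfl

lemma mul_gc_expand (g : Polynomial K) (a : A) :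
    a * gc PA g = g.toFinsupp.coeff.sum fun j c => c • (a * pc PA j) := by
  have : a * gc PA g = LinearMap.mulLeft K a (gc PA g) := rfl
  rw [this, gc, Finsupp.linearCombination_apply, map_finsuppSum]
  apply Finsupp.sum_congr
  intro j _
  rw [LinearMap.map_smul]
  rfl

lemma gc_comm (g : Polynomial K) (a : A) : gc PA g * a = a * gc PA g := by
  rw [gc_mul_expand, mul_gc_expand]
  apply Finsupp.sum_congr
  intro j _
  rw [pc_comm]

lemma gc_mul_gc (g g' : Polynomial K) : gc PA g * gc PA g' = gc PA (g * g') := by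
  induction g using Polynomial.induction_on' with
  | add p q hp hq => rw [gc_add, add_mul, hp, hq, add_mul, gc_add]
  | monomial i c =>
    induction g' using Polynomial.induction_on' with
    | add p q hp hq => rw [gc_add, mul_add, hp, hq, mul_add, gc_add]
    | monomial j d =>
      rw [gc_monomial, gc_monomial, Polynomial.monomial_mul_monomial, gc_monomial,
        smul_mul_assoc, mul_smul_comm, pc_mul_pc, smul_smul]

lemma gc_mul_oneA (g : Polynomial K) : gc PA g * oneA PA = gc PA g := mul_oneA PA _

end CycleAlgebra

section CycleAlgebraRepr
set_option linter.unusedSectionVars false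
set_option maxHeartbeats 1000000

open DGraph

variable {K : Type} [Field K] {n : ℕ} [NeZero n]
variable {A : Type} [NonUnitalRing A] [Module K A] [SMulCommClass K A A] [IsScalarTower K A A]
variable (PA : PathAlgebraOn K (cycleGraph n) A)

lemma reprL (v : Fin n) (m : ℕ) (b : A) (w : Fin n) (k : ℕ) :
    (EB PA).repr (EB PA (v, m) * b) (w, k)
      = if w = v ∧ m ≤ k then (EB PA).repr b (v + (m : Fin n), k - m) else 0 := by
  by_cases hc : w = v ∧ m ≤ k
  · rw [if_pos hc]
    have key : (Finsupp.lapply (w, k)) ∘ₗ ((EB PA).repr.toLinearMap ∘ₗ LinearMap.mulLeft K (EB PA (v, m)))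
        = (Finsupp.lapply (v + (m : Fin n), k - m)) ∘ₗ (EB PA).repr.toLinearMap := by
      apply Basis.ext (EB PA)
      rintro ⟨u, i⟩
      obtain ⟨hw, hm⟩ := hc
      subst w
      simp only [LinearMap.comp_apply, LinearMap.mulLeft_apply, Finsupp.lapply_apply,
        LinearEquiv.coe_toLinearMap]
      rw [EB_mul]
      by_cases h1 : u = v + (m : Fin n)
      · rw [if_pos h1, Basis.repr_self, Basis.repr_self, Finsupp.single_apply,
          Finsupp.single_apply, h1]
        simp only [Prod.mk.injEq]
        have : (m + i = k) ↔ (i = k - m) := by omega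
        simp [this]
      · rw [if_neg h1, map_zero, Finsupp.coe_zero, Pi.zero_apply, Basis.repr_self,
          Finsupp.single_apply]
        rw [if_neg]
        simp only [Prod.mk.injEq, not_and]
        intro h
        exact absurd h h1
    exact LinearMap.congr_fun key b
  · rw [if_neg hc]
    have key : (Finsupp.lapply (w, k)) ∘ₗ ((EB PA).repr.toLinearMap ∘ₗ LinearMap.mulLeft K (EB PA (v, m)))
        = (0 : A →ₗ[K] K) := by
      apply Basis.ext (EB PA)
      rintro ⟨u, i⟩
      simp only [LinearMap.comp_apply, LinearMap.mulLeft_apply, Finsupp.lapply_apply,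
        LinearEquiv.coe_toLinearMap, LinearMap.zero_apply]
      rw [EB_mul]
      by_cases h1 : u = v + (m : Fin n)
      · rw [if_pos h1, Basis.repr_self, Finsupp.single_apply]
        rw [if_neg]
        simp only [Prod.mk.injEq, not_and]
        intro hv hk
        exact hc ⟨hv.symm, by omega⟩
      · rw [if_neg h1, map_zero, Finsupp.coe_zero, Pi.zero_apply]
    exact LinearMap.congr_fun key b

lemma reprR (u : Fin n) (j : ℕ) (b : A) (w : Fin n) (k : ℕ) :
    (EB PA).repr (b * EB PA (u, j)) (w, k)
      = if j ≤ k ∧ u = w + ((k - j : ℕ) : Fin n) then (EB PA).repr b (w, k - j) else 0 := by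
  by_cases hc : j ≤ k ∧ u = w + ((k - j : ℕ) : Fin n)
  · rw [if_pos hc]
    have key : (Finsupp.lapply (w, k)) ∘ₗ ((EB PA).repr.toLinearMap ∘ₗ LinearMap.mulRight K (EB PA (u, j)))
        = (Finsupp.lapply (w, k - j)) ∘ₗ (EB PA).repr.toLinearMap := by
      apply Basis.ext (EB PA)
      rintro ⟨x, i⟩
      simp only [LinearMap.comp_apply, LinearMap.mulRight_apply, Finsupp.lapply_apply,
        LinearEquiv.coe_toLinearMap]
      rw [EB_mul]
      by_cases h1 : u = x + (i : Fin n)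
      · rw [if_pos h1, Basis.repr_self, Basis.repr_self, Finsupp.single_apply,
          Finsupp.single_apply]
        simp only [Prod.mk.injEq]
        by_cases h2 : x = w ∧ i = k - j
        · obtain ⟨h2x, h2i⟩ := h2
          subst h2x
          rw [h2i]
          have hj : j ≤ k := hc.1
          have hk : k - j + j = k := by omega
          simp [hk]
        · rw [if_neg, if_neg]
          · intro hh
            exact h2 ⟨hh.1, hh.2⟩
          · intro hh
            obtain ⟨hx, hik⟩ := hh
            exact h2 ⟨hx, by omega⟩
      · rw [if_neg h1, map_zero, Finsupp.coe_zero, Pi.zero_apply, Basis.repr_self,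
          Finsupp.single_apply]
        rw [if_neg]
        simp only [Prod.mk.injEq, not_and]
        intro hx hik
        subst hx
        rw [← hik] at hc
        exact h1 hc.2
    exact LinearMap.congr_fun key b
  · rw [if_neg hc]
    have key : (Finsupp.lapply (w, k)) ∘ₗ ((EB PA).repr.toLinearMap ∘ₗ LinearMap.mulRight K (EB PA (u, j)))
        = (0 : A →ₗ[K] K) := by
      apply Basis.ext (EB PA)
      rintro ⟨x, i⟩
      simp only [LinearMap.comp_apply, LinearMap.mulRight_apply, Finsupp.lapply_apply,
        LinearEquiv.coe_toLinearMap, LinearMap.zero_apply]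
      rw [EB_mul]
      by_cases h1 : u = x + (i : Fin n)
      · rw [if_pos h1, Basis.repr_self, Finsupp.single_apply]
        rw [if_neg]
        simp only [Prod.mk.injEq, not_and]
        intro hx hik
        subst hx
        apply hc
        constructor
        · omega
        · have : k - j = i := by omega
          rw [this]
          exact h1
      · rw [if_neg h1, map_zero, Finsupp.coe_zero, Pi.zero_apply]
    exact LinearMap.congr_fun key b

lemma repr_pc_mul (j : ℕ) (a : A) (w : Fin n) (k : ℕ) :
    (EB PA).repr (pc PA j * a) (w, k)
      = if n * j ≤ k then (EB PA).repr a (w, k - n * j) else 0 := by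
  rw [pc, Finset.sum_mul, map_sum, Finset.sum_apply']
  have : ∀ v : Fin n, (EB PA).repr (EB PA (v, n * j) * a) (w, k)
      = if v = w then (if n * j ≤ k then (EB PA).repr a (w + ((n * j : ℕ) : Fin n), k - n * j) else 0) else 0 := by
    intro v
    rw [reprL]
    by_cases h : v = w
    · subst h
      by_cases h2 : n * j ≤ k
      · rw [if_pos ⟨rfl, h2⟩, if_pos rfl, if_pos h2]
      · rw [if_neg (by tauto), if_pos rfl, if_neg h2]
    · rw [if_neg (by tauto), if_neg h]
  simp only [this]
  rw [Finset.sum_ite_eq']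
  have hcast : ((n * j : ℕ) : Fin n) = 0 := by
    rw [Fin.natCast_eq_zero]
    exact Dvd.intro j rfl
  simp [hcast]

lemma repr_pc (j : ℕ) (w : Fin n) (k : ℕ) :
    (EB PA).repr (pc PA j) (w, k) = if n * j = k then 1 else 0 := by
  rw [pc, map_sum, Finset.sum_apply']
  have : ∀ v : Fin n, (EB PA).repr (EB PA (v, n * j)) (w, k)
      = if v = w then (if n * j = k then (1 : K) else 0) else 0 := by
    intro v
    rw [Basis.repr_self, Finsupp.single_apply]
    simp only [Prod.mk.injEq]
    by_cases h1 : v = w <;> by_cases h2 : n * j = k <;> simp [h1, h2]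
  simp only [this]
  rw [Finset.sum_ite_eq']
  simp

lemma oneA_ne_zero : oneA PA ≠ 0 := by
  intro h
  have h0 : EB PA (0, 0) = 0 := by
    rw [← oneA_mul PA (EB PA (0, 0)), h, zero_mul]
  exact Basis.ne_zero (EB PA) (0, 0) h0

lemma repr_gc_mul (g : Polynomial K) (a : A) (w : Fin n) (k : ℕ) :
    (EB PA).repr (gc PA g * a) (w, k)
      = ∑ j ∈ g.support, g.coeff j * (if n * j ≤ k then (EB PA).repr a (w, k - n * j) else 0) := by
  rw [gc_mul_expand, Finsupp.sum, map_sum, Finset.sum_apply']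
  apply Finset.sum_congr rfl
  intro j hj
  rw [map_smul, Finsupp.smul_apply, repr_pc_mul, smul_eq_mul]
  rfl

lemma gc_mul_ne_zero (g : Polynomial K) (hg : g ≠ 0) (a : A) (ha : a ≠ 0) :
    gc PA g * a ≠ 0 := by
  have hα : (EB PA).repr a ≠ 0 := fun h => ha ((EB PA).repr.map_eq_zero_iff.mp h)
  have hsupp : ((EB PA).repr a).support.Nonempty := by
    rw [Finsupp.support_nonempty_iff]
    exact hα
  set α := (EB PA).repr a with hαdef
  have himg : (α.support.image Prod.snd).Nonempty := hsupp.image _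
  set r := (α.support.image Prod.snd).max' himg with hr
  obtain ⟨⟨w, r'⟩, hmem, hr'⟩ := Finset.mem_image.mp ((α.support.image Prod.snd).max'_mem himg)
  simp only at hr'
  subst hr'
  set J := g.natDegree with hJ
  have hnpos : 0 < n := Nat.pos_of_ne_zero (NeZero.ne n)
  intro hz
  have hrepr : (EB PA).repr (gc PA g * a) (w, n * J + r) = 0 := by
    rw [hz, map_zero, Finsupp.coe_zero, Pi.zero_apply]
  rw [repr_gc_mul] at hrepr
  rw [Finset.sum_eq_single J] at hrepr
  · have h1 : n * J ≤ n * J + r := by omega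
    rw [if_pos h1] at hrepr
    have h2 : n * J + r - n * J = r := by omega
    rw [h2] at hrepr
    have hcoeff : g.coeff J ≠ 0 := by
      rw [hJ, ← Polynomial.leadingCoeff]
      exact Polynomial.leadingCoeff_ne_zero.mpr hg
    have hαr : α (w, r) ≠ 0 := Finsupp.mem_support_iff.mp hmem
    rw [← hαdef] at hrepr
    exact (mul_ne_zero hcoeff hαr) hrepr
  · intro j hjs hjJ
    have hjle : j ≤ J := Polynomial.le_natDegree_of_mem_supp j hjs
    have hjlt : j < J := lt_of_le_of_ne hjle hjJ
    by_cases hle : n * j ≤ n * J + r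
    · rw [if_pos hle]
      have : (w, n * J + r - n * j) ∉ α.support := by
        intro hmem2
        have := Finset.le_max' (α.support.image Prod.snd) (n * J + r - n * j)
          (Finset.mem_image_of_mem Prod.snd hmem2)
        rw [← hr] at this
        have h3 : n * J + r - n * j ≤ r := this
        have h4 : n * (j + 1) ≤ n * J := Nat.mul_le_mul_left n (Nat.succ_le_of_lt hjlt)
        have h5 : n * (j + 1) = n * j + n := by ring
        omega
      rw [Finsupp.notMem_support_iff] at this
      rw [← hαdef, this, mul_zero]
    · rw [if_neg hle, mul_zero]
  · intro hJs
    exact absurd (Polynomial.natDegree_mem_support_of_nonzero hg) hJs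

end CycleAlgebraRepr

section CycleAlgebraCentral
set_option linter.unusedSectionVars false
set_option maxHeartbeats 1000000

open DGraph

variable {K : Type} [Field K] {n : ℕ} [NeZero n]
variable {A : Type} [NonUnitalRing A] [Module K A] [SMulCommClass K A A] [IsScalarTower K A A]
variable (PA : PathAlgebraOn K (cycleGraph n) A)

lemma gc_ne_zero (g : Polynomial K) (hg : g ≠ 0) : gc PA g ≠ 0 := by
  have := gc_mul_ne_zero PA g hg (oneA PA) (oneA_ne_zero PA)
  rwa [gc_mul_oneA] at this

lemma gc_sub (g g' : Polynomial K) : gc PA (g - g') = gc PA g - gc PA g' := by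
  rw [gc, gc, gc, Polynomial.toFinsupp_sub, AddMonoidAlgebra.coeff_sub, map_sub]

lemma gc_inj {g g' : Polynomial K} (h : gc PA g = gc PA g') : g = g' := by
  by_contra hne
  exact gc_ne_zero PA (g - g') (sub_ne_zero.mpr hne) (by rw [gc_sub, h, sub_self])

lemma repr_gc (g : Polynomial K) (w : Fin n) (k : ℕ) :
    (EB PA).repr (gc PA g) (w, k)
      = ∑ j ∈ g.toFinsupp.coeff.support, g.toFinsupp.coeff j * (if n * j = k then 1 else 0) := by
  rw [gc, Finsupp.linearCombination_apply, Finsupp.sum, map_sum, Finset.sum_apply']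
  apply Finset.sum_congr rfl
  intro j hj
  rw [map_smul, Finsupp.smul_apply, repr_pc, smul_eq_mul]

lemma central_eq_gc (z : A) (hz : ∀ a : A, z * a = a * z) :
    ∃ h : Polynomial K, z = gc PA h := by
  classical
  set ζ := (EB PA).repr z with hζ
  have hnpos : 0 < n := Nat.pos_of_ne_zero (NeZero.ne n)
  have step1 : ∀ (v : Fin n) (k : ℕ), ((k : Fin n) ≠ 0) → ζ (v, k) = 0 := by
    intro v k hk
    have e1 : (EB PA).repr (EB PA (v, 0) * z) (v, k) = ζ (v, k) := by
      rw [reprL]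
      simp
      rfl
    have e2 : (EB PA).repr (z * EB PA (v, 0)) (v, k) = 0 := by
      rw [reprR, if_neg]
      rintro ⟨-, hvk⟩
      rw [Nat.sub_zero, left_eq_add] at hvk
      exact hk hvk
    rw [← hz] at e1
    rw [e2] at e1
    exact e1.symm
  have step2 : ∀ (v : Fin n) (k : ℕ), ζ (v + 1, k) = ζ (v, k) := by
    intro v k
    by_cases hk : ((k : Fin n) = 0)
    · have e1 : (EB PA).repr (EB PA (v, 1) * z) (v, k + 1) = ζ (v + 1, k) := by
        rw [reprL, if_pos ⟨rfl, by omega⟩]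
        try norm_num
        rfl
      have hc2 : (1 ≤ k + 1 ∧ v = v + ((k + 1 - 1 : ℕ) : Fin n)) := by
        refine ⟨by omega, ?_⟩
        rw [Nat.add_sub_cancel, hk, add_zero]
      have e2 : (EB PA).repr (z * EB PA (v, 1)) (v, k + 1) = ζ (v, k) := by
        rw [reprR, if_pos hc2]
        try norm_num
        rfl
      rw [← hz] at e1
      rw [e2] at e1
      exact e1.symm
    · rw [step1 (v + 1) k hk, step1 v k hk]
  have step3 : ∀ (v : Fin n) (k : ℕ), ζ (v, k) = ζ (0, k) := by
    have aux : ∀ (i : ℕ) (k : ℕ), ζ ((i : Fin n), k) = ζ (0, k) := by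
      intro i
      induction i with
      | zero => intro k; norm_num
      | succ m ih =>
        intro k
        have hc : ((m + 1 : ℕ) : Fin n) = (m : Fin n) + 1 := by push_cast; ring
        rw [hc, step2, ih]
    intro v k
    have := aux v.val k
    rwa [Fin.cast_val_eq_self] at this
  have hmem : ∀ j : ℕ, (j ∈ ((ζ.support.image Prod.snd).image (· / n)).filter
      (fun j => ζ (0, n * j) ≠ 0)) ↔ ζ (0, n * j) ≠ 0 := by
    intro j
    rw [Finset.mem_filter]
    constructor
    · exact fun h => h.2
    · intro h
      refine ⟨?_, h⟩
      apply Finset.mem_image.mpr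
      refine ⟨n * j, ?_, ?_⟩
      · apply Finset.mem_image.mpr
        exact ⟨(0, n * j), Finsupp.mem_support_iff.mpr h, rfl⟩
      · exact Nat.mul_div_cancel_left j hnpos
  set φ : ℕ →₀ K := ⟨((ζ.support.image Prod.snd).image (· / n)).filter
      (fun j => ζ (0, n * j) ≠ 0), fun j => ζ (0, n * j), hmem⟩ with hφ
  refine ⟨Polynomial.ofFinsupp (AddMonoidAlgebra.ofCoeff φ), ?_⟩
  apply (EB PA).repr.injective
  ext ⟨w, k⟩
  rw [← hζ, repr_gc]
  have htf : (Polynomial.ofFinsupp (AddMonoidAlgebra.ofCoeff φ) : Polynomial K).toFinsupp.coeff = φ := rfl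
  rw [htf]
  by_cases hdvd : n ∣ k
  · obtain ⟨j0, rfl⟩ := hdvd
    rw [Finset.sum_eq_single j0]
    · rw [if_pos rfl, mul_one]
      show ζ (w, n * j0) = ζ (0, n * j0)
      exact step3 w (n * j0)
    · intro j hjs hjne
      rw [if_neg, mul_zero]
      intro hc
      exact hjne (Nat.eq_of_mul_eq_mul_left hnpos hc)
    · intro hj0
      rw [Finsupp.notMem_support_iff] at hj0
      show (φ j0 : K) * _ = 0
      rw [hj0, zero_mul]
  · have hk : ((k : Fin n) ≠ 0) := fun hc => hdvd (Fin.natCast_eq_zero.mp hc)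
    rw [step1 w k hk]
    symm
    apply Finset.sum_eq_zero
    intro j hj
    rw [if_neg, mul_zero]
    intro hc
    exact hdvd ⟨j, hc.symm⟩

end CycleAlgebraCentral

section IdealLemma
set_option linter.unusedSectionVars false
set_option maxHeartbeats 1000000

open DGraph

variable {K : Type} [Field K] {n : ℕ} [NeZero n]
variable {A : Type} [NonUnitalRing A] [Module K A] [SMulCommClass K A A] [IsScalarTower K A A]
variable (PA : PathAlgebraOn K (cycleGraph n) A)

lemma exists_gc_mem (I : TwoSidedIdeal A) (hI : I ≠ ⊥) :
    ∃ g : Polynomial K, g ≠ 0 ∧ gc PA g ∈ I := by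
  classical
  have hnpos : 0 < n := Nat.pos_of_ne_zero (NeZero.ne n)
  obtain ⟨x, hxI, hx0⟩ : ∃ x, x ∈ I ∧ x ≠ 0 := by
    by_contra hc
    push_neg at hc
    apply hI
    rw [eq_bot_iff]
    intro y hy
    rw [TwoSidedIdeal.mem_bot]
    exact hc y hy
  set α := (EB PA).repr x with hα
  have hα0 : α.support.Nonempty := Finsupp.support_nonempty_iff.mpr
    (fun h => hx0 ((EB PA).repr.map_eq_zero_iff.mp h))
  have himg : (α.support.image Prod.snd).Nonempty := hα0.image _
  set r := (α.support.image Prod.snd).min' himg with hrdef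
  obtain ⟨⟨v, r'⟩, hvr, hr'⟩ := Finset.mem_image.mp ((α.support.image Prod.snd).min'_mem himg)
  simp only at hr'
  subst hr'
  set u := v + (r : Fin n) with hu
  set x' := EB PA (v, 0) * x * EB PA (u, 0) with hx'
  have hx'I : x' ∈ I := I.mul_mem_right _ _ (I.mul_mem_left _ _ hxI)
  set β := (EB PA).repr x' with hβ
  have hβeval : ∀ (w : Fin n) (k : ℕ),
      β (w, k) = if w = v ∧ u = v + ((k : ℕ) : Fin n) then α (v, k) else 0 := by
    intro w k
    rw [hβ, hx', reprR, reprL]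
    simp only [Nat.sub_zero, Nat.cast_zero, add_zero, Nat.zero_le, true_and, le_refl]
    by_cases h1 : w = v
    · subst h1
      by_cases h2 : u = w + ((k : ℕ) : Fin n) <;> simp [h2] <;> rfl
    · by_cases h2 : u = w + ((k : ℕ) : Fin n) <;> simp [h1, h2]
  have hβvr : β (v, r) = α (v, r) := by
    rw [hβeval, if_pos ⟨rfl, hu⟩]
  have hαvr : α (v, r) ≠ 0 := Finsupp.mem_support_iff.mp hvr
  have hβsupp : ∀ (w : Fin n) (k : ℕ), β (w, k) ≠ 0 →
      w = v ∧ r ≤ k ∧ ((k : ℕ) : Fin n) = ((r : ℕ) : Fin n) := by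
    intro w k h
    rw [hβeval] at h
    by_cases hc : w = v ∧ u = v + ((k : ℕ) : Fin n)
    · refine ⟨hc.1, ?_, ?_⟩
      · have hαk : α (v, k) ≠ 0 := by rwa [if_pos hc] at h
        exact Finset.min'_le _ k (Finset.mem_image_of_mem Prod.snd (Finsupp.mem_support_iff.mpr hαk))
      · have : v + ((k : ℕ) : Fin n) = v + ((r : ℕ) : Fin n) := by rw [← hc.2, hu]
        exact add_left_cancel this
    · rw [if_neg hc] at h
      exact absurd rfl h
  have hmemP : ∀ j : ℕ, (j ∈ ((β.support.image Prod.snd).image (fun k => (k - r) / n)).filter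
      (fun j => β (v, r + n * j) ≠ 0)) ↔ β (v, r + n * j) ≠ 0 := by
    intro j
    rw [Finset.mem_filter]
    constructor
    · exact fun h => h.2
    · intro h
      refine ⟨Finset.mem_image.mpr ⟨r + n * j,
        Finset.mem_image.mpr ⟨(v, r + n * j), Finsupp.mem_support_iff.mpr h, rfl⟩, ?_⟩, h⟩
      show (r + n * j - r) / n = j
      rw [Nat.add_sub_cancel_left, Nat.mul_div_cancel_left j hnpos]
  set P : ℕ →₀ K := ⟨((β.support.image Prod.snd).image (fun k => (k - r) / n)).filter
      (fun j => β (v, r + n * j) ≠ 0), fun j => β (v, r + n * j), hmemP⟩ with hP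
  set p : Polynomial K := Polynomial.ofFinsupp (AddMonoidAlgebra.ofCoeff P) with hp
  have hpco : ∀ j, p.coeff j = β (v, r + n * j) := fun j => rfl
  have hpsupp : p.support = P.support := rfl
  have hp0 : p ≠ 0 := by
    intro hc
    have h0 : p.coeff 0 = 0 := by rw [hc]; simp
    rw [hpco 0, Nat.mul_zero, Nat.add_zero, hβvr] at h0
    exact hαvr h0
  have claimA : gc PA p * EB PA (v, r) = x' := by
    apply (EB PA).repr.injective
    ext ⟨w, k⟩
    rw [repr_gc_mul, ← hβ]
    by_cases hw : w = v
    · subst hw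
      by_cases hk : r ≤ k ∧ n ∣ (k - r)
      · obtain ⟨hrk, d, hd⟩ := hk
        have hkd : k = r + n * d := by omega
        rw [Finset.sum_eq_single d]
        · have h1 : n * d ≤ k := by omega
          have h2 : k - n * d = r := by omega
          rw [if_pos h1, h2, Basis.repr_self, Finsupp.single_apply, if_pos rfl, mul_one,
            hpco, ← hkd]
        · intro j hjs hjne
          by_cases h1 : n * j ≤ k
          · rw [if_pos h1, Basis.repr_self, Finsupp.single_apply]
            rw [if_neg, mul_zero]
            intro hcon
            have h2 : r = k - n * j := (Prod.mk.injEq _ _ _ _).mp hcon |>.2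
            have h3 : n * j = n * d := by omega
            exact hjne (Nat.eq_of_mul_eq_mul_left hnpos h3)
          · rw [if_neg h1, mul_zero]
        · intro hd0
          have hPd : p.coeff d = 0 := Polynomial.notMem_support_iff.mp hd0
          have h1 : n * d ≤ k := by omega
          have h2 : k - n * d = r := by omega
          rw [if_pos h1, h2, Basis.repr_self, Finsupp.single_apply, if_pos rfl, mul_one, hPd]
      · have hβ0 : β (w, k) = 0 := by
          by_contra hc
          obtain ⟨-, hrk, hcast⟩ := hβsupp w k hc
          apply hk
          refine ⟨hrk, ?_⟩
          have : ((k - r : ℕ) : Fin n) = 0 := by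
            rw [Nat.cast_sub hrk, hcast, sub_self]
          exact Fin.natCast_eq_zero.mp this
        rw [hβ0]
        apply Finset.sum_eq_zero
        intro j hj
        by_cases h1 : n * j ≤ k
        · rw [if_pos h1, Basis.repr_self, Finsupp.single_apply, if_neg, mul_zero]
          intro hcon
          have h2 : r = k - n * j := (Prod.mk.injEq _ _ _ _).mp hcon |>.2
          exact hk ⟨by omega, ⟨j, by omega⟩⟩
        · rw [if_neg h1, mul_zero]
    · have hβ0 : β (w, k) = 0 := by
        by_contra hc
        exact hw (hβsupp w k hc).1
      rw [hβ0]
      apply Finset.sum_eq_zero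
      intro j hj
      by_cases h1 : n * j ≤ k
      · rw [if_pos h1, Basis.repr_self, Finsupp.single_apply, if_neg, mul_zero]
        intro hcon
        exact hw ((Prod.mk.injEq _ _ _ _).mp hcon |>.1).symm
      · rw [if_neg h1, mul_zero]
  set N := r + 1 with hN
  have hterm : ∀ w : Fin n, gc PA p * EB PA (w, n * N) ∈ I := by
    intro w
    set k := ((v - w : Fin n)).val with hk
    have hwk : w + ((k : ℕ) : Fin n) = v := by
      rw [hk, Fin.cast_val_eq_self, add_sub_cancel]
    have hkn : k < n := (v - w).isLt
    have hl : k + r ≤ n * N := by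
      have h1 : n * N = n * r + n := by rw [hN]; ring
      have h2 : r ≤ n * r := Nat.le_mul_of_pos_left r hnpos
      omega
    set l := n * N - (k + r) with hldef
    have e1 : EB PA (w, k) * x' = gc PA p * EB PA (w, k + r) := by
      rw [← claimA, ← mul_assoc, ← gc_comm, mul_assoc, EB_mul, if_pos hwk.symm]
    have e2 : EB PA (w, k) * x' * EB PA (w + ((k + r : ℕ) : Fin n), l)
        = gc PA p * EB PA (w, n * N) := by
      rw [e1, mul_assoc, EB_mul, if_pos rfl]
      have h3 : k + r + l = n * N := Nat.add_sub_cancel' hl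
      rw [h3]
    rw [← e2]
    exact I.mul_mem_right _ _ (I.mul_mem_left _ _ hx'I)
  refine ⟨Polynomial.X ^ N * p, mul_ne_zero (pow_ne_zero _ Polynomial.X_ne_zero) hp0, ?_⟩
  have hsum : gc PA (Polynomial.X ^ N * p) = ∑ w : Fin n, gc PA p * EB PA (w, n * N) := by
    rw [mul_comm, ← gc_mul_gc, Polynomial.X_pow_eq_monomial, gc_monomial, one_smul,
      show pc PA N = ∑ w : Fin n, EB PA (w, n * N) from rfl, Finset.mul_sum]
  rw [hsum]
  exact I.finsetSum_mem _ _ (fun w _ => hterm w)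

end IdealLemma

section ExtendedCentroid
set_option linter.unusedSectionVars false
set_option maxHeartbeats 1000000

open DGraph

variable {K : Type} [Field K] {n : ℕ} [NeZero n]
variable {A : Type} [NonUnitalRing A] [Module K A] [SMulCommClass K A A] [IsScalarTower K A A]
variable (PA : PathAlgebraOn K (cycleGraph n) A)

lemma admpair_central (p : AdmPair K A) (g : Polynomial K) (hg : gc PA g ∈ p.I) :
    ∃ h : Polynomial K, p.f (gc PA g) = gc PA h := by
  apply central_eq_gc
  intro a
  calc p.f (gc PA g) * a = p.f (gc PA g * a) := (p.map_right _ hg a).symm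
    _ = p.f (a * gc PA g) := by rw [gc_comm]
    _ = a * p.f (gc PA g) := p.map_left _ hg a

/-- Representation predicate: `(g, h)` represents the pair `p`. -/
def RepP (p : AdmPair K A) (g h : Polynomial K) : Prop :=
  g ≠ 0 ∧ gc PA g ∈ p.I ∧ p.f (gc PA g) = gc PA h

lemma rep_exists (p : AdmPair K A) : ∃ gh : Polynomial K × Polynomial K, RepP PA p gh.1 gh.2 := by
  obtain ⟨g, hg0, hgI⟩ := exists_gc_mem PA p.I p.ne
  obtain ⟨h, hh⟩ := admpair_central PA p g hgI
  exact ⟨(g, h), hg0, hgI, hh⟩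

lemma rep_cross {p : AdmPair K A} {g h g' h' : Polynomial K}
    (h1 : RepP PA p g h) (h2 : RepP PA p g' h') : h * g' = h' * g := by
  obtain ⟨hg0, hgI, hgf⟩ := h1
  obtain ⟨hg0', hgI', hgf'⟩ := h2
  apply gc_inj PA
  calc gc PA (h * g') = gc PA h * gc PA g' := (gc_mul_gc PA h g').symm
    _ = p.f (gc PA g) * gc PA g' := by rw [hgf]
    _ = p.f (gc PA g * gc PA g') := (p.map_right _ hgI _).symm
    _ = p.f (gc PA g' * gc PA g) := by rw [gc_comm]
    _ = p.f (gc PA g') * gc PA g := p.map_right _ hgI' _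
    _ = gc PA h' * gc PA g := by rw [hgf']
    _ = gc PA (h' * g) := gc_mul_gc PA h' g

/-- The fundamental identity: `gc g * p.f x = gc h * x` for `x` in the ideal. -/
lemma rep_eval {p : AdmPair K A} {g h : Polynomial K} (hr : RepP PA p g h)
    (x : A) (hx : x ∈ p.I) : gc PA g * p.f x = gc PA h * x := by
  obtain ⟨hg0, hgI, hgf⟩ := hr
  calc gc PA g * p.f x = p.f (gc PA g * x) := (p.map_left x hx _).symm
    _ = p.f (x * gc PA g) := by rw [gc_comm]
    _ = x * p.f (gc PA g) := p.map_left _ hgI x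
    _ = x * gc PA h := by rw [hgf]
    _ = gc PA h * x := (gc_comm PA h x).symm

end ExtendedCentroid


set_option maxHeartbeats 1600000 in
/-- the extended centroid of `KCₙ` is isomorphic to `K(x)`:
there is a map from admissible pairs onto `K(x)` which identifies exactly the
equivalent pairs, sends the identity to `1`, and is additive and multiplicative on
representatives of sums and products of classes. -/
theorem stmt7 (K : Type) [Field K] (n : ℕ) [NeZero n]
    (A : Type) [NonUnitalRing A] [Module K A] [SMulCommClass K A A] [IsScalarTower K A A]
    (PA : PathAlgebraOn K (cycleGraph n) A) :
    ∃ Ω : AdmPair K A → RatFunc K,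
      Function.Surjective Ω ∧
      (∀ p q : AdmPair K A, Ω p = Ω q ↔ p.Equiv q) ∧
      (∀ p : AdmPair K A, (∀ x ∈ p.I, p.f x = x) → Ω p = 1) ∧
      (∀ p q r : AdmPair K A, r.I ≤ p.I → r.I ≤ q.I →
        (∀ x ∈ r.I, r.f x = p.f x + q.f x) → Ω r = Ω p + Ω q) ∧
      (∀ p q r : AdmPair K A, r.I ≤ q.I →
        (∀ x ∈ r.I, q.f x ∈ p.I ∧ r.f x = p.f (q.f x)) → Ω r = Ω p * Ω q) := by
  classical
  set ι : Polynomial K → RatFunc K := ⇑(algebraMap (Polynomial K) (RatFunc K)) with hι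
  have ιinj : Function.Injective ι := RatFunc.algebraMap_injective K
  have ιne : ∀ q : Polynomial K, q ≠ 0 → ι q ≠ 0 := by
    intro q hq hc
    exact hq (ιinj (by rw [hc, hι, map_zero]))
  have hrep := fun p : AdmPair K A => rep_exists PA p
  set sel : AdmPair K A → Polynomial K × Polynomial K := fun p => Classical.choose (hrep p)
    with hsel
  have hselR : ∀ p, RepP PA p (sel p).1 (sel p).2 := fun p => Classical.choose_spec (hrep p)
  set Ω : AdmPair K A → RatFunc K := fun p => ι (sel p).2 / ι (sel p).1 with hΩ
  have hΩapp : ∀ p, Ω p = ι (sel p).2 / ι (sel p).1 := fun p => rfl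
  have char : ∀ (p : AdmPair K A) (g h : Polynomial K), RepP PA p g h → Ω p = ι h / ι g := by
    intro p g h hr
    have hcross := rep_cross PA (hselR p) hr
    rw [hΩapp, div_eq_div_iff (ιne _ (hselR p).1) (ιne _ hr.1), hι, ← map_mul, ← map_mul, hcross]
  refine ⟨Ω, ?_, ?_, ?_, ?_, ?_⟩
  · -- surjectivity
    intro ρ
    set g := ρ.denom with hgdef
    set h := ρ.num with hhdef
    have hg0 : g ≠ 0 := RatFunc.denom_ne_zero ρ
    have hinj : Function.Injective (LinearMap.mulLeft K (gc PA g)) := by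
      intro a b hab
      by_contra hne
      have h1 : gc PA g * (a - b) = 0 := by
        rw [mul_sub, sub_eq_zero]
        exact hab
      exact gc_mul_ne_zero PA g hg0 (a - b) (sub_ne_zero.mpr hne) h1
    obtain ⟨ℓ, hℓ⟩ := LinearMap.exists_leftInverse_of_injective _
      (LinearMap.ker_eq_bot.mpr hinj)
    have hℓapp : ∀ b : A, ℓ (gc PA g * b) = b := by
      intro b
      have := LinearMap.congr_fun hℓ b
      simpa using this
    set I : TwoSidedIdeal A := TwoSidedIdeal.mk' {a | ∃ b : A, a = gc PA g * b}
      ⟨0, (mul_zero _).symm⟩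
      (by rintro x y ⟨b, rfl⟩ ⟨c, rfl⟩; exact ⟨b + c, (mul_add _ _ _).symm⟩)
      (by rintro x ⟨b, rfl⟩; exact ⟨-b, (mul_neg _ _).symm⟩)
      (by rintro x y ⟨b, rfl⟩
          exact ⟨x * b, by rw [← mul_assoc, ← gc_comm, mul_assoc]⟩)
      (by rintro x y ⟨b, rfl⟩; exact ⟨b * y, by rw [mul_assoc]⟩) with hI
    have hmem : ∀ x : A, x ∈ I ↔ ∃ b : A, x = gc PA g * b := by
      intro x
      rw [hI]
      exact TwoSidedIdeal.mem_mk' _ _ _ _ _ _ x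
    have hgI : gc PA g ∈ I := (hmem _).mpr ⟨oneA PA, (gc_mul_oneA PA g).symm⟩
    have hne : I ≠ ⊥ := by
      intro hc
      have h2 : gc PA g ∈ I := hgI
      rw [hc, TwoSidedIdeal.mem_bot] at h2
      exact gc_ne_zero PA g hg0 h2
    set F : A →ₗ[K] A := (LinearMap.mulLeft K (gc PA h)).comp ℓ with hF
    have hFapp : ∀ b : A, F (gc PA g * b) = gc PA h * b := by
      intro b
      rw [hF]
      simp only [LinearMap.comp_apply, LinearMap.mulLeft_apply, hℓapp]
    have hmapl : ∀ x ∈ I, ∀ a : A, F (a * x) = a * F x := by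
      intro x hx a
      obtain ⟨b, rfl⟩ := (hmem x).mp hx
      have e : a * (gc PA g * b) = gc PA g * (a * b) := by
        rw [← mul_assoc, ← gc_comm, mul_assoc]
      rw [e, hFapp, hFapp, ← mul_assoc, gc_comm PA h a, mul_assoc]
    have hmapr : ∀ x ∈ I, ∀ a : A, F (x * a) = F x * a := by
      intro x hx a
      obtain ⟨b, rfl⟩ := (hmem x).mp hx
      rw [mul_assoc, hFapp, hFapp, mul_assoc]
    refine ⟨⟨I, hne, F, hmapl, hmapr⟩, ?_⟩
    have hrq : RepP PA ⟨I, hne, F, hmapl, hmapr⟩ g h := by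
      refine ⟨hg0, hgI, ?_⟩
      show F (gc PA g) = gc PA h
      rw [show gc PA g = gc PA g * oneA PA from (gc_mul_oneA PA g).symm, hFapp]
      exact mul_oneA PA _
    rw [char _ g h hrq, hι, hgdef, hhdef, RatFunc.num_div_denom]
  · -- equivalence iff
    intro p q
    constructor
    · intro hΩeq x hxp hxq
      have hrp := hselR p
      have hrq := hselR q
      have hcross : (sel p).2 * (sel q).1 = (sel q).2 * (sel p).1 := by
        rw [hΩapp, hΩapp, div_eq_div_iff (ιne _ hrp.1) (ιne _ hrq.1)] at hΩeq
        exact ιinj (by rw [hι, map_mul, map_mul]; exact hΩeq)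
      have e1 : gc PA (sel p).1 * p.f x = gc PA (sel p).2 * x := rep_eval PA hrp x hxp
      have e2 : gc PA (sel q).1 * q.f x = gc PA (sel q).2 * x := rep_eval PA hrq x hxq
      have e3 : gc PA ((sel p).1 * (sel q).1) * p.f x = gc PA ((sel p).2 * (sel q).1) * x := by
        calc gc PA ((sel p).1 * (sel q).1) * p.f x
            = (gc PA (sel q).1 * gc PA (sel p).1) * p.f x := by
              rw [gc_mul_gc, mul_comm ((sel q).1)]
          _ = gc PA (sel q).1 * (gc PA (sel p).1 * p.f x) := by rw [mul_assoc]
          _ = gc PA (sel q).1 * (gc PA (sel p).2 * x) := by rw [e1]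
          _ = (gc PA (sel q).1 * gc PA (sel p).2) * x := by rw [mul_assoc]
          _ = gc PA ((sel p).2 * (sel q).1) * x := by
              rw [gc_mul_gc, mul_comm ((sel q).1)]
      have e4 : gc PA ((sel p).1 * (sel q).1) * q.f x = gc PA ((sel p).2 * (sel q).1) * x := by
        calc gc PA ((sel p).1 * (sel q).1) * q.f x
            = (gc PA (sel p).1 * gc PA (sel q).1) * q.f x := by rw [gc_mul_gc]
          _ = gc PA (sel p).1 * (gc PA (sel q).1 * q.f x) := by rw [mul_assoc]
          _ = gc PA (sel p).1 * (gc PA (sel q).2 * x) := by rw [e2]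
          _ = (gc PA (sel p).1 * gc PA (sel q).2) * x := by rw [mul_assoc]
          _ = gc PA ((sel q).2 * (sel p).1) * x := by
              rw [gc_mul_gc, mul_comm ((sel q).2)]
          _ = gc PA ((sel p).2 * (sel q).1) * x := by rw [hcross]
      have e5 : gc PA ((sel p).1 * (sel q).1) * (p.f x - q.f x) = 0 := by
        rw [mul_sub, e3, e4, sub_self]
      by_contra hne2
      exact gc_mul_ne_zero PA _ (mul_ne_zero hrp.1 hrq.1) _ (sub_ne_zero.mpr hne2) e5
    · intro hEq
      have hrp := hselR p
      have hrq := hselR q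
      have hxp : gc PA ((sel p).1 * (sel q).1) ∈ p.I := by
        rw [← gc_mul_gc]
        exact p.I.mul_mem_right _ _ hrp.2.1
      have hxq : gc PA ((sel p).1 * (sel q).1) ∈ q.I := by
        rw [mul_comm ((sel p).1), ← gc_mul_gc]
        exact q.I.mul_mem_right _ _ hrq.2.1
      have hfp : p.f (gc PA ((sel p).1 * (sel q).1)) = gc PA ((sel p).2 * (sel q).1) := by
        rw [← gc_mul_gc, p.map_right _ hrp.2.1 _, hrp.2.2, gc_mul_gc]
      have hfq : q.f (gc PA ((sel p).1 * (sel q).1)) = gc PA ((sel q).2 * (sel p).1) := by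
        rw [mul_comm ((sel p).1), ← gc_mul_gc, q.map_right _ hrq.2.1 _, hrq.2.2, gc_mul_gc]
      have heq2 := hEq _ hxp hxq
      rw [hfp, hfq] at heq2
      have hpq := gc_inj PA heq2
      rw [hΩapp, hΩapp, div_eq_div_iff (ιne _ hrp.1) (ιne _ hrq.1), hι, ← map_mul, ← map_mul,
        hpq]
  · -- identity
    intro p hid
    have hrp := hselR p
    have h1 : gc PA (sel p).2 = gc PA (sel p).1 := by
      rw [← hrp.2.2]
      exact hid _ hrp.2.1
    have h2 := gc_inj PA h1
    rw [hΩapp, h2, div_self (ιne _ hrp.1)]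
  · -- additivity
    intro p q r hrpI hrqI hadd
    have hrr := hselR r
    have hgp : gc PA (sel r).1 ∈ p.I := hrpI hrr.2.1
    have hgq : gc PA (sel r).1 ∈ q.I := hrqI hrr.2.1
    obtain ⟨hp, hhp⟩ := admpair_central PA p (sel r).1 hgp
    obtain ⟨hq, hhq⟩ := admpair_central PA q (sel r).1 hgq
    have hsum : r.f (gc PA (sel r).1) = gc PA (hp + hq) := by
      rw [hadd _ hrr.2.1, hhp, hhq, gc_add]
    rw [char p _ hp ⟨hrr.1, hgp, hhp⟩, char q _ hq ⟨hrr.1, hgq, hhq⟩,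
      char r _ (hp + hq) ⟨hrr.1, hrr.2.1, hsum⟩, hι, map_add, add_div]
  · -- multiplicativity
    intro p q r hrqI hmul
    have hrr := hselR r
    have hgq : gc PA (sel r).1 ∈ q.I := hrqI hrr.2.1
    obtain ⟨h₂, hh₂⟩ := admpair_central PA q (sel r).1 hgq
    have hΩq : Ω q = ι h₂ / ι (sel r).1 := char q _ h₂ ⟨hrr.1, hgq, hh₂⟩
    obtain ⟨hqfI, hcomp⟩ := hmul (gc PA (sel r).1) hrr.2.1
    rw [hh₂] at hqfI hcomp
    by_cases h20 : h₂ = 0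
    · subst h20
      rw [gc_zero, map_zero] at hcomp
      have hΩr : Ω r = ι 0 / ι (sel r).1 :=
        char r _ 0 ⟨hrr.1, hrr.2.1, by rw [hcomp, gc_zero]⟩
      have hz : ι (0 : Polynomial K) = 0 := by rw [hι, map_zero]
      rw [hΩr, hΩq, hz, zero_div, mul_zero]
    · obtain ⟨h₃, hh₃⟩ := admpair_central PA p h₂ hqfI
      have hΩp : Ω p = ι h₃ / ι h₂ := char p h₂ h₃ ⟨h20, hqfI, hh₃⟩
      have hΩr : Ω r = ι h₃ / ι (sel r).1 :=
        char r _ h₃ ⟨hrr.1, hrr.2.1, by rw [hcomp, hh₃]⟩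
      rw [hΩp, hΩq, hΩr, div_mul_div_comm,
        div_eq_div_iff (ιne _ hrr.1) (mul_ne_zero (ιne _ h20) (ιne _ hrr.1))]
      ring
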